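/- arXiv:2308.08971 — 5 statements merged into one kernel-verified Lean document; each statement's English description precedes it below -/
import Mathlib

section
/- Let α ∈ (0,1), σ = 1 − α/2, and let η > 0. Define ϱ(η, σ, α) = 1 + (1 + 1/η)^{−1}·[((1 + 1/(ση))^{2−α} − 1) − (1/η)·((1 + 1/(ση))^{1−α} + 1)]. Then for all η ∈ [3/4, 62], ϱ(η, σ, α) ≥ 1. -/
open Real Set

/-- Auxiliary: `artanh(β x) ≤ β · artanh x` in log form, for `β ∈ [0,1]`, `x ∈ [0,1)`. -/
lemma artanh_aux (b x : ℝ) (hb0 : 0 ≤ b) (hb1 : b ≤ 1) (hx0 : 0 ≤ x) (hx1 : x < 1) :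
    Real.log (1 + b * x) - Real.log (1 - b * x) ≤
      b * (Real.log (1 + x) - Real.log (1 - x)) := by
  set f : ℝ → ℝ := fun t =>
    b * (Real.log (1 + t) - Real.log (1 - t)) - (Real.log (1 + b * t) - Real.log (1 - b * t))
    with hf
  -- derivative facts
  have hderiv : ∀ t ∈ Icc (0 : ℝ) x, HasDerivAt f
      (b * (1 / (1 + t) - (-1) / (1 - t)) - (b / (1 + b * t) - (-b) / (1 - b * t))) t := by
    intro t ht
    have ht0 : 0 ≤ t := ht.1
    have htx : t ≤ x := ht.2
    have h1 : (0:ℝ) < 1 + t := by linarith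
    have h2 : (0:ℝ) < 1 - t := by linarith
    have hbt : b * t ≤ t := by nlinarith
    have hbt0 : 0 ≤ b * t := by positivity
    have h3 : (0:ℝ) < 1 + b * t := by linarith
    have h4 : (0:ℝ) < 1 - b * t := by linarith
    have d1 : HasDerivAt (fun t : ℝ => Real.log (1 + t)) (1 / (1 + t)) t := by
      simpa using (((hasDerivAt_id t).const_add 1).log h1.ne')
    have d2 : HasDerivAt (fun t : ℝ => Real.log (1 - t)) ((-1) / (1 - t)) t := by
      simpa using (((hasDerivAt_id t).const_sub 1).log h2.ne')
    have d3 : HasDerivAt (fun t : ℝ => Real.log (1 + b * t)) (b / (1 + b * t)) t := by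
      simpa using ((((hasDerivAt_id t).const_mul b).const_add 1).log h3.ne')
    have d4 : HasDerivAt (fun t : ℝ => Real.log (1 - b * t)) ((-b) / (1 - b * t)) t := by
      have : HasDerivAt (fun t : ℝ => 1 - b * t) (-b) t := by
        simpa using (((hasDerivAt_id t).const_mul b).const_sub 1)
      simpa using this.log h4.ne'
    exact ((d1.sub d2).const_mul b).sub (d3.sub d4)
  have hderiv_nonneg : ∀ t ∈ Icc (0 : ℝ) x,
      0 ≤ b * (1 / (1 + t) - (-1) / (1 - t)) - (b / (1 + b * t) - (-b) / (1 - b * t)) := by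
    intro t ht
    have ht0 : 0 ≤ t := ht.1
    have htx : t ≤ x := ht.2
    have h1 : (0:ℝ) < 1 + t := by linarith
    have h2 : (0:ℝ) < 1 - t := by linarith
    have hbt : b * t ≤ t := by nlinarith
    have hbt0 : 0 ≤ b * t := by positivity
    have h3 : (0:ℝ) < 1 + b * t := by linarith
    have h4 : (0:ℝ) < 1 - b * t := by linarith
    have key : b / (1 + b * t) + b / (1 - b * t) ≤ b * (1 / (1 + t) + 1 / (1 - t)) := by
      have e1 : 1 / (1 + t) + 1 / (1 - t) = 2 / ((1 + t) * (1 - t)) := by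
        field_simp; ring
      have e2 : b / (1 + b * t) + b / (1 - b * t) = b * (2 / ((1 + b * t) * (1 - b * t))) := by
        field_simp; ring
      rw [e1, e2]
      have hle : (1 + t) * (1 - t) ≤ (1 + b * t) * (1 - b * t) := by nlinarith
      have := div_le_div_of_nonneg_left (by norm_num : (0:ℝ) ≤ 2)
        (by positivity : (0:ℝ) < (1 + t) * (1 - t)) hle
      -- this : 2 / ((1 + b*t)*(1-b*t)) ≤ 2 / ((1+t)*(1-t)) ... check direction below
      nlinarith [this, hb0]
    have : b / (1 + b * t) - (-b) / (1 - b * t) = b / (1 + b * t) + b / (1 - b * t) := by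
      ring
    rw [this]
    have : b * (1 / (1 + t) - (-1) / (1 - t)) = b * (1 / (1 + t) + 1 / (1 - t)) := by ring
    rw [this]
    linarith [key]
  have hmono : MonotoneOn f (Icc (0 : ℝ) x) := by
    apply monotoneOn_of_deriv_nonneg (convex_Icc _ _)
    · exact fun t ht => (hderiv t ht).continuousAt.continuousWithinAt
    · intro t ht
      have ht' : t ∈ Icc (0:ℝ) x := interior_subset ht
      exact ((hderiv t ht').differentiableAt).differentiableWithinAt
    · intro t ht
      have ht' : t ∈ Icc (0:ℝ) x := interior_subset ht
      rw [(hderiv t ht').deriv]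
      exact hderiv_nonneg t ht'
  have hf0 : f 0 = 0 := by simp [hf]
  have hx' : (0:ℝ) ∈ Icc (0:ℝ) x := ⟨le_refl _, hx0⟩
  have hxx : x ∈ Icc (0:ℝ) x := ⟨hx0, le_refl _⟩
  have := hmono hx' hxx hx0
  rw [hf0] at this
  simpa [hf] using this

set_option maxHeartbeats 1000000 in
theorem varrho_lower_bound
    (alpha : ℝ) (halpha : alpha ∈ Set.Ioo (0 : ℝ) 1)
    (sigma : ℝ) (hsigma : sigma = 1 - alpha / 2) :
    ∀ eta ∈ Set.Icc (3 / 4 : ℝ) 62,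
      1 + (1 + 1 / eta)⁻¹ *
        (((1 + 1 / (sigma * eta)) ^ (2 - alpha) - 1)
          - (1 / eta) * ((1 + 1 / (sigma * eta)) ^ (1 - alpha) + 1)) ≥ 1 := by
  obtain ⟨ha0, ha1⟩ := halpha
  intro eta ⟨heta1, heta2⟩
  have heta : (0 : ℝ) < eta := by linarith
  have hsig : (0 : ℝ) < sigma := by rw [hsigma]; linarith
  set u : ℝ := 1 / (sigma * eta) with hu
  have hupos : 0 < u := by positivity
  have h1u : (0 : ℝ) < 1 + u := by linarith
  have hinveta : 1 / eta = sigma * u := by rw [hu]; field_simp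
  set b : ℝ := 1 - alpha with hb
  set x : ℝ := u / (u + 2) with hx
  have hx0 : 0 ≤ x := by positivity
  have hx1 : x < 1 := by
    rw [hx, div_lt_one (by linarith)]; linarith
  have hu2 : (0:ℝ) < u + 2 := by linarith
  -- apply the aux lemma
  have haux := artanh_aux b x (by rw [hb]; linarith) (by rw [hb]; linarith) hx0 hx1
  have h1px : (0:ℝ) < 1 + x := by linarith
  have h1mx : (0:ℝ) < 1 - x := by linarith
  have hbx : b * x ≤ x := by nlinarith [hx0]
  have hbx0 : 0 ≤ b * x := by
    apply mul_nonneg _ hx0; rw [hb]; linarith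
  have h1pbx : (0:ℝ) < 1 + b * x := by linarith
  have h1mbx : (0:ℝ) < 1 - b * x := by linarith
  -- rewrite log differences as logs of quotients
  have e1 : Real.log (1 + x) - Real.log (1 - x) = Real.log ((1 + x) / (1 - x)) :=
    (Real.log_div h1px.ne' h1mx.ne').symm
  have e2 : Real.log (1 + b * x) - Real.log (1 - b * x)
      = Real.log ((1 + b * x) / (1 - b * x)) :=
    (Real.log_div h1pbx.ne' h1mbx.ne').symm
  have q1 : (1 + x) / (1 - x) = 1 + u := by
    rw [hx]; field_simp; ring
  have q2 : (1 + b * x) / (1 - b * x) = (1 + u - alpha * u / 2) / (1 + alpha * u / 2) := by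
    rw [hx, hb]
    have hden : (0:ℝ) < 2 + alpha * u := by positivity
    rw [div_eq_div_iff]
    · field_simp; ring
    · have : 1 - (1 - alpha) * (u / (u + 2)) = (2 + alpha * u) / (u + 2) := by
        field_simp; ring
      rw [this]; positivity
    · positivity
  rw [e1, e2, q1, q2] at haux
  have hlog : Real.log ((1 + u - alpha * u / 2) / (1 + alpha * u / 2))
      ≤ Real.log ((1 + u) ^ b) := by
    rw [Real.log_rpow h1u]; linarith
  have hq_pos : (0:ℝ) < (1 + u - alpha * u / 2) / (1 + alpha * u / 2) := by
    apply div_pos _ (by positivity)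
    nlinarith
  have hrp_pos : (0:ℝ) < (1 + u) ^ b := Real.rpow_pos_of_pos h1u b
  have hmain : (1 + u - alpha * u / 2) / (1 + alpha * u / 2) ≤ (1 + u) ^ b :=
    (Real.log_le_log_iff hq_pos hrp_pos).mp hlog
  have hmain' : 1 + u - alpha * u / 2 ≤ (1 + u) ^ b * (1 + alpha * u / 2) := by
    rw [div_le_iff₀ (by positivity)] at hmain
    linarith
  -- assemble
  have hsplit : (1 + u) ^ (2 - alpha) = (1 + u) ^ (1 - alpha) * (1 + u) := by
    rw [show (2 : ℝ) - alpha = (1 - alpha) + 1 by ring, Real.rpow_add_one h1u.ne']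
  have hB : 0 ≤ ((1 + u) ^ (2 - alpha) - 1) - (1 / eta) * ((1 + u) ^ (1 - alpha) + 1) := by
    rw [hsplit, hinveta, hsigma]
    have : (1 + u) ^ (1 - alpha) = (1 + u) ^ b := by rw [hb]
    rw [this]
    nlinarith [hmain']
  have hc : 0 < (1 + 1 / eta)⁻¹ := by positivity
  have := mul_nonneg (le_of_lt hc) hB
  linarith
end

section
/- Let μ = βσ + w with β ≥ 0, σ ∈ (1/2, 1], w > 0, and let λ₁, λ₂ > 0, a₁, a₂ ≥ 2/3, b₁, b₂ ≥ 0. Then the amplification factor G = [(a₁a₂/μ)·w − ((1−σ)/μ)(λ₁a₂b₁ + λ₂a₁b₂ + βa₁a₂) + (σ²/μ²)λ₁λ₂b₁b₂] / [(a₁ + (σλ₁/μ)b₁)(a₂ + (σλ₂/μ)b₂)] satisfies |G| ≤ 1. -/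
theorem amplification_factor_bound
    (beta sigma w lam1 lam2 a1 a2 b1 b2 mu G : ℝ)
    (hbeta : 0 ≤ beta) (hsigma : sigma ∈ Set.Ioc (1 / 2 : ℝ) 1) (hw : 0 < w)
    (hlam1 : 0 < lam1) (hlam2 : 0 < lam2)
    (ha1 : 2 / 3 ≤ a1) (ha2 : 2 / 3 ≤ a2) (hb1 : 0 ≤ b1) (hb2 : 0 ≤ b2)
    (hmu : mu = beta * sigma + w)
    (hG : G = ((a1 * a2 / mu) * w
        - ((1 - sigma) / mu) * (lam1 * a2 * b1 + lam2 * a1 * b2 + beta * a1 * a2)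
        + (sigma ^ 2 / mu ^ 2) * lam1 * lam2 * b1 * b2)
      / ((a1 + (sigma * lam1 / mu) * b1) * (a2 + (sigma * lam2 / mu) * b2))) :
    |G| ≤ 1 := by
  obtain ⟨hs1, hs2⟩ := hsigma
  have hs0 : 0 < sigma := by linarith
  have hmu0 : 0 < mu := by nlinarith
  have ha1' : 0 < a1 := by linarith
  have ha2' : 0 < a2 := by linarith
  have ht1 : 0 ≤ sigma * lam1 / mu * b1 := by positivity
  have ht2 : 0 ≤ sigma * lam2 / mu * b2 := by positivity
  have hD : 0 < (a1 + sigma * lam1 / mu * b1) * (a2 + sigma * lam2 / mu * b2) := by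
    apply mul_pos <;> linarith
  rw [hG, abs_div, abs_of_pos hD, div_le_one hD]
  set N := a1 * a2 / mu * w
      - (1 - sigma) / mu * (lam1 * a2 * b1 + lam2 * a1 * b2 + beta * a1 * a2)
      + sigma ^ 2 / mu ^ 2 * lam1 * lam2 * b1 * b2 with hN
  have hmusq : (0:ℝ) < mu ^ 2 := by positivity
  have e1 : N * mu ^ 2 = a1 * a2 * w * mu
      - (1 - sigma) * (lam1 * a2 * b1 + lam2 * a1 * b2 + beta * a1 * a2) * mu
      + sigma ^ 2 * lam1 * lam2 * b1 * b2 := by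
    rw [hN]; field_simp
  have e2 : ((a1 + sigma * lam1 / mu * b1) * (a2 + sigma * lam2 / mu * b2)) * mu ^ 2
      = (a1 * mu + sigma * lam1 * b1) * (a2 * mu + sigma * lam2 * b2) := by
    field_simp
  have key : |N| * mu ^ 2 ≤ ((a1 + sigma * lam1 / mu * b1) * (a2 + sigma * lam2 / mu * b2)) * mu ^ 2 := by
    rw [show |N| * mu ^ 2 = |N * mu ^ 2| from by rw [abs_mul, abs_of_pos hmusq], e2]
    rw [abs_le]
    constructor
    · rw [neg_le, ← neg_mul]
      have e1' : -N * mu ^ 2 = -(N * mu ^ 2) := by ring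
      rw [e1', e1, neg_le]
      have hid : a1 * a2 * w * mu
          - (1 - sigma) * (lam1 * a2 * b1 + lam2 * a1 * b2 + beta * a1 * a2) * mu
          + sigma ^ 2 * lam1 * lam2 * b1 * b2
          + (a1 * mu + sigma * lam1 * b1) * (a2 * mu + sigma * lam2 * b2)
          = mu * (a1 * a2 * (2 * w + beta * (2 * sigma - 1))
              + (2 * sigma - 1) * (lam1 * a2 * b1 + lam2 * a1 * b2))
            + 2 * sigma ^ 2 * lam1 * lam2 * b1 * b2 := by rw [hmu]; ring
      have h1 : 0 ≤ mu * (a1 * a2 * (2 * w + beta * (2 * sigma - 1))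
          + (2 * sigma - 1) * (lam1 * a2 * b1 + lam2 * a1 * b2)) := by
        apply mul_nonneg hmu0.le
        have : (0:ℝ) ≤ 2 * sigma - 1 := by linarith
        have h2 : 0 ≤ a1 * a2 * (2 * w + beta * (2 * sigma - 1)) := by
          apply mul_nonneg (mul_nonneg ha1'.le ha2'.le); nlinarith
        have h3 : 0 ≤ (2 * sigma - 1) * (lam1 * a2 * b1 + lam2 * a1 * b2) := by
          apply mul_nonneg this
          have := mul_nonneg (mul_nonneg hlam1.le ha2'.le) hb1
          have := mul_nonneg (mul_nonneg hlam2.le ha1'.le) hb2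
          linarith
        linarith
      have h4 : (0:ℝ) ≤ 2 * sigma ^ 2 * lam1 * lam2 * b1 * b2 := by positivity
      linarith
    · rw [e1]
      have hid : (a1 * mu + sigma * lam1 * b1) * (a2 * mu + sigma * lam2 * b2)
          - (a1 * a2 * w * mu
          - (1 - sigma) * (lam1 * a2 * b1 + lam2 * a1 * b2 + beta * a1 * a2) * mu
          + sigma ^ 2 * lam1 * lam2 * b1 * b2)
          = mu * (a1 * a2 * beta * sigma + sigma * (lam1 * b1 * a2 + lam2 * b2 * a1)
              + (1 - sigma) * (lam1 * a2 * b1 + lam2 * a1 * b2 + beta * a1 * a2)) := by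
        rw [hmu]; ring
      have h1 : 0 ≤ mu * (a1 * a2 * beta * sigma + sigma * (lam1 * b1 * a2 + lam2 * b2 * a1)
          + (1 - sigma) * (lam1 * a2 * b1 + lam2 * a1 * b2 + beta * a1 * a2)) := by
        apply mul_nonneg hmu0.le
        have hσ1 : (0:ℝ) ≤ 1 - sigma := by linarith
        have h2 : 0 ≤ a1 * a2 * beta * sigma := by positivity
        have h3 : 0 ≤ sigma * (lam1 * b1 * a2 + lam2 * b2 * a1) := by
          apply mul_nonneg hs0.le
          have := mul_nonneg (mul_nonneg hlam1.le hb1) ha2'.le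
          have := mul_nonneg (mul_nonneg hlam2.le hb2) ha1'.le
          linarith
        have h4 : 0 ≤ (1 - sigma) * (lam1 * a2 * b1 + lam2 * a1 * b2 + beta * a1 * a2) := by
          apply mul_nonneg hσ1
          have := mul_nonneg (mul_nonneg hlam1.le ha2'.le) hb1
          have := mul_nonneg (mul_nonneg hlam2.le ha1'.le) hb2
          have := mul_nonneg (mul_nonneg hbeta ha1'.le) ha2'.le
          linarith
        linarith
      linarith
  exact le_of_mul_le_mul_right key hmusq
end

section
/- Let σ ∈ (1/2, 1], β ≥ 0, λ₁, λ₂ > 0, a₁, a₂ ≥ 2/3, b₁, b₂ ≥ 0, and let w₀ < w₁ < ⋯ < w_i be positive reals (monotone increasing L2-1_σ coefficients). Set μ = βσ + w_i. Suppose complex numbers ω⁰, ω¹, …, ω^i satisfy |ω^k| ≤ |ω⁰| for all 0 ≤ k ≤ i, and ω^{i+1} = [ (a₁a₂/μ)(Σ_{k=1}^{i}(w_k − w_{k−1})ω^k + w₀ω⁰) − ((1−σ)/μ)(λ₁a₂b₁ + λ₂a₁b₂ + βa₁a₂)ω^i + (σ²/μ²)λ₁λ₂b₁b₂ω^i ]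 / [ (a₁ + (σλ₁/μ)b₁)(a₂ + (σλ₂/μ)b₂) ]. Then |ω^{i+1}| ≤ |ω⁰|. -/
theorem fourier_stability_inductive_step
    (beta sigma lam1 lam2 a1 a2 b1 b2 : ℝ)
    (hbeta : 0 ≤ beta) (hsigma : sigma ∈ Set.Ioc (1 / 2 : ℝ) 1)
    (hlam1 : 0 < lam1) (hlam2 : 0 < lam2)
    (ha1 : 2 / 3 ≤ a1) (ha2 : 2 / 3 ≤ a2) (hb1 : 0 ≤ b1) (hb2 : 0 ≤ b2)
    (i : ℕ) (w : ℕ → ℝ) (hw0 : 0 < w 0)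
    (hwmono : ∀ k, k < i → w k < w (k + 1))
    (mu : ℝ) (hmu : mu = beta * sigma + w i)
    (omega : ℕ → ℂ)
    (hind : ∀ k, k ≤ i → ‖omega k‖ ≤ ‖omega 0‖)
    (hrec : omega (i + 1) =
      (((a1 * a2 / mu : ℝ) : ℂ) *
          ((∑ k ∈ Finset.Icc 1 i, (((w k - w (k - 1) : ℝ)) : ℂ) * omega k)
            + ((w 0 : ℝ) : ℂ) * omega 0)
        - (((1 - sigma) / mu * (lam1 * a2 * b1 + lam2 * a1 * b2 + beta * a1 * a2) : ℝ) : ℂ)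
            * omega i
        + ((sigma ^ 2 / mu ^ 2 * (lam1 * lam2 * b1 * b2) : ℝ) : ℂ) * omega i)
      / (((a1 + sigma * lam1 / mu * b1 : ℝ) : ℂ)
          * ((a2 + sigma * lam2 / mu * b2 : ℝ) : ℂ))) :
    ‖omega (i + 1)‖ ≤ ‖omega 0‖ := by
  obtain ⟨hs1, hs2⟩ := hsigma
  set M := ‖omega 0‖ with hMdef
  have hMnn : 0 ≤ M := norm_nonneg _
  have hwle : ∀ k, k ≤ i → w 0 ≤ w k := by
    intro k hk
    induction k with
    | zero => exact le_rfl
    | succ n ih =>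
      have h1 := hwmono n (by omega)
      have h2 := ih (by omega)
      linarith
  have hwi : 0 < w i := lt_of_lt_of_le hw0 (hwle i le_rfl)
  have hmupos : 0 < mu := by
    have : 0 ≤ beta * sigma := mul_nonneg hbeta (by linarith)
    rw [hmu]; linarith
  -- telescoping
  have htel : ∀ n : ℕ, ∑ k ∈ Finset.Icc 1 n, (w k - w (k - 1)) = w n - w 0 := by
    intro n
    induction n with
    | zero => simp
    | succ m ih =>
      rw [Finset.sum_Icc_succ_top (by omega), ih]
      simp only [Nat.add_sub_cancel]
      ring
  -- bound the sum
  have hS : ‖∑ k ∈ Finset.Icc 1 i, (((w k - w (k - 1) : ℝ)) : ℂ) * omega k‖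
      ≤ (w i - w 0) * M := by
    refine le_trans (norm_sum_le _ _) ?_
    have hle : ∀ k ∈ Finset.Icc 1 i,
        ‖(((w k - w (k - 1) : ℝ)) : ℂ) * omega k‖ ≤ (w k - w (k - 1)) * M := by
      intro k hk
      obtain ⟨hk1, hk2⟩ := Finset.mem_Icc.mp hk
      have hpos : 0 ≤ w k - w (k - 1) := by
        have h := hwmono (k - 1) (by omega)
        have hkk : k - 1 + 1 = k := by omega
        rw [hkk] at h
        linarith
      rw [norm_mul, Complex.norm_real, Real.norm_eq_abs, abs_of_nonneg hpos]
      exact mul_le_mul_of_nonneg_left (hind k hk2) hpos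
    refine le_trans (Finset.sum_le_sum hle) ?_
    rw [← Finset.sum_mul, htel i]
  have hc1 : 0 ≤ a1 * a2 / mu := by
    have : (0:ℝ) < a1 := by linarith
    have : (0:ℝ) < a2 := by linarith
    positivity
  have hc2 : 0 ≤ (1 - sigma) / mu * (lam1 * a2 * b1 + lam2 * a1 * b2 + beta * a1 * a2) := by
    have h1 : 0 ≤ 1 - sigma := by linarith
    have h2 : 0 ≤ lam1 * a2 * b1 + lam2 * a1 * b2 + beta * a1 * a2 := by
      have : (0:ℝ) ≤ a1 := by linarith
      have : (0:ℝ) ≤ a2 := by linarith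
      positivity
    have h3 : 0 ≤ (1 - sigma) / mu := div_nonneg h1 hmupos.le
    exact mul_nonneg h3 h2
  have hc3 : 0 ≤ sigma ^ 2 / mu ^ 2 * (lam1 * lam2 * b1 * b2) := by positivity
  have hd1 : 0 < a1 + sigma * lam1 / mu * b1 := by
    have : 0 ≤ sigma * lam1 / mu * b1 := by
      have : (0:ℝ) ≤ sigma := by linarith
      positivity
    linarith
  have hd2 : 0 < a2 + sigma * lam2 / mu * b2 := by
    have : 0 ≤ sigma * lam2 / mu * b2 := by
      have : (0:ℝ) ≤ sigma := by linarith
      positivity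
    linarith
  have hwiM : ‖omega i‖ ≤ M := hind i le_rfl
  -- pieces of the numerator
  set X := (((a1 * a2 / mu : ℝ) : ℂ) *
      ((∑ k ∈ Finset.Icc 1 i, (((w k - w (k - 1) : ℝ)) : ℂ) * omega k)
        + ((w 0 : ℝ) : ℂ) * omega 0)) with hX
  set Y := ((((1 - sigma) / mu * (lam1 * a2 * b1 + lam2 * a1 * b2 + beta * a1 * a2) : ℝ) : ℂ)
      * omega i) with hY
  set Z := (((sigma ^ 2 / mu ^ 2 * (lam1 * lam2 * b1 * b2) : ℝ) : ℂ) * omega i) with hZ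
  have t1 : ‖X‖ ≤ a1 * a2 / mu * w i * M := by
    rw [hX, norm_mul, Complex.norm_real, Real.norm_eq_abs, abs_of_nonneg hc1, mul_assoc]
    apply mul_le_mul_of_nonneg_left _ hc1
    refine le_trans (norm_add_le _ _) ?_
    have h2 : ‖((w 0 : ℝ) : ℂ) * omega 0‖ ≤ w 0 * M := by
      rw [norm_mul, Complex.norm_real, Real.norm_eq_abs, abs_of_pos hw0]
    linarith
  have t2 : ‖Y‖
      ≤ (1 - sigma) / mu * (lam1 * a2 * b1 + lam2 * a1 * b2 + beta * a1 * a2) * M := by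
    rw [hY, norm_mul, Complex.norm_real, Real.norm_eq_abs, abs_of_nonneg hc2]
    exact mul_le_mul_of_nonneg_left hwiM hc2
  have t3 : ‖Z‖ ≤ sigma ^ 2 / mu ^ 2 * (lam1 * lam2 * b1 * b2) * M := by
    rw [hZ, norm_mul, Complex.norm_real, Real.norm_eq_abs, abs_of_nonneg hc3]
    exact mul_le_mul_of_nonneg_left hwiM hc3
  have step : ‖X - Y + Z‖ ≤ ‖X‖ + ‖Y‖ + ‖Z‖ := by
    refine le_trans (norm_add_le _ _) ?_
    have := norm_sub_le X Y
    linarith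
  have hnum : ‖X - Y + Z‖
      ≤ (a1 * a2 / mu * w i
        + (1 - sigma) / mu * (lam1 * a2 * b1 + lam2 * a1 * b2 + beta * a1 * a2)
        + sigma ^ 2 / mu ^ 2 * (lam1 * lam2 * b1 * b2)) * M := by
    have e : (a1 * a2 / mu * w i
        + (1 - sigma) / mu * (lam1 * a2 * b1 + lam2 * a1 * b2 + beta * a1 * a2)
        + sigma ^ 2 / mu ^ 2 * (lam1 * lam2 * b1 * b2)) * M
      = a1 * a2 / mu * w i * M
        + (1 - sigma) / mu * (lam1 * a2 * b1 + lam2 * a1 * b2 + beta * a1 * a2) * M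
        + sigma ^ 2 / mu ^ 2 * (lam1 * lam2 * b1 * b2) * M := by ring
    rw [e]
    linarith
  -- coefficient inequality
  have hcoef : a1 * a2 / mu * w i
        + (1 - sigma) / mu * (lam1 * a2 * b1 + lam2 * a1 * b2 + beta * a1 * a2)
        + sigma ^ 2 / mu ^ 2 * (lam1 * lam2 * b1 * b2)
      ≤ (a1 + sigma * lam1 / mu * b1) * (a2 + sigma * lam2 / mu * b2) := by
    have hmu2 : (0:ℝ) < mu ^ 2 := by positivity
    rw [← mul_le_mul_iff_of_pos_right hmu2]
    have hmune : mu ≠ 0 := hmupos.ne'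
    have e1 : (a1 * a2 / mu * w i
        + (1 - sigma) / mu * (lam1 * a2 * b1 + lam2 * a1 * b2 + beta * a1 * a2)
        + sigma ^ 2 / mu ^ 2 * (lam1 * lam2 * b1 * b2)) * mu ^ 2
      = a1 * a2 * w i * mu
        + (1 - sigma) * (lam1 * a2 * b1 + lam2 * a1 * b2 + beta * a1 * a2) * mu
        + sigma ^ 2 * (lam1 * lam2 * b1 * b2) := by
      field_simp
    have e2 : (a1 + sigma * lam1 / mu * b1) * (a2 + sigma * lam2 / mu * b2) * mu ^ 2
      = a1 * a2 * mu ^ 2 + sigma * lam1 * b1 * a2 * mu + sigma * lam2 * b2 * a1 * mu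
        + sigma ^ 2 * (lam1 * lam2 * b1 * b2) := by
      field_simp
      ring
    rw [e1, e2]
    have h0 : mu * (a1 * a2) * (mu - beta * sigma - w i) = 0 := by rw [hmu]; ring
    have hs : (0:ℝ) ≤ 2 * sigma - 1 := by linarith
    have hA : 0 ≤ (2 * sigma - 1) * mu * (lam1 * b1 * a2) := by
      have : (0:ℝ) ≤ a2 := by linarith
      positivity
    have hB : 0 ≤ (2 * sigma - 1) * mu * (lam2 * b2 * a1) := by
      have : (0:ℝ) ≤ a1 := by linarith
      positivity
    have hC : 0 ≤ (2 * sigma - 1) * mu * (beta * a1 * a2) := by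
      have : (0:ℝ) ≤ a1 := by linarith
      have : (0:ℝ) ≤ a2 := by linarith
      positivity
    linarith [h0, hA, hB, hC]
  -- conclude
  rw [hrec, norm_div, norm_mul, Complex.norm_real, Complex.norm_real, Real.norm_eq_abs, Real.norm_eq_abs,
    abs_of_pos hd1, abs_of_pos hd2, div_le_iff₀ (by positivity)]
  refine le_trans hnum (le_trans (mul_le_mul_of_nonneg_right hcoef hMnn)
    (le_of_eq (mul_comm _ _)))
end

section
/- Under the hypotheses of the Fourier stability recursion, by induction on i one obtains |ω^i| ≤ |ω⁰| for all 0 ≤ i ≤ N, where ω^{i+1} is given by the amplification recursion with monotone increasing positive coefficients w_{i,k} satisfying w_{i,0} < w_{i,1} < ⋯ < w_{i,i}. -/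
lemma fourier_tele_sum (f : ℕ → ℝ) : ∀ i : ℕ,
    ∑ k ∈ Finset.Icc 1 i, (f k - f (k - 1)) = f i - f 0 := by
  intro i
  induction i with
  | zero => simp
  | succ n ih =>
    rw [Finset.sum_Icc_succ_top (Nat.succ_le_succ (Nat.zero_le n)), ih]
    simp

lemma fourier_coeff_bound (sigma beta lam1 lam2 a1 a2 b1 b2 m ww : ℝ)
    (hs1 : 1/2 < sigma) (hbeta : 0 ≤ beta)
    (hlam1 : 0 < lam1) (hlam2 : 0 < lam2)
    (ha1 : 0 < a1) (ha2 : 0 < a2) (hb1 : 0 ≤ b1) (hb2 : 0 ≤ b2)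
    (hww : 0 < ww) (hμ : m = beta * sigma + ww) :
    a1 * a2 / m * ww
      + (1 - sigma) / m * (lam1 * a2 * b1 + lam2 * a1 * b2 + beta * a1 * a2)
      + sigma ^ 2 / m ^ 2 * (lam1 * lam2 * b1 * b2)
    ≤ (a1 + sigma * lam1 / m * b1) * (a2 + sigma * lam2 / m * b2) := by
  have hσ0 : (0:ℝ) < sigma := by linarith
  have hm : (0:ℝ) < m := by nlinarith
  rw [← sub_nonneg]
  have h : (a1 + sigma * lam1 / m * b1) * (a2 + sigma * lam2 / m * b2)
      - (a1 * a2 / m * ww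
      + (1 - sigma) / m * (lam1 * a2 * b1 + lam2 * a1 * b2 + beta * a1 * a2)
      + sigma ^ 2 / m ^ 2 * (lam1 * lam2 * b1 * b2))
      = (2 * sigma - 1) * (lam1 * a2 * b1 + lam2 * a1 * b2 + beta * a1 * a2) / m := by
    subst hμ
    field_simp
    ring
  rw [h]
  have hS : 0 ≤ lam1 * a2 * b1 + lam2 * a1 * b2 + beta * a1 * a2 := by positivity
  have h2 : (0:ℝ) ≤ 2 * sigma - 1 := by linarith
  positivity

theorem fourier_stability_full_induction
    (beta sigma lam1 lam2 a1 a2 b1 b2 : ℝ)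
    (hbeta : 0 ≤ beta) (hsigma : sigma ∈ Set.Ioc (1 / 2 : ℝ) 1)
    (hlam1 : 0 < lam1) (hlam2 : 0 < lam2)
    (ha1 : 2 / 3 ≤ a1) (ha2 : 2 / 3 ≤ a2) (hb1 : 0 ≤ b1) (hb2 : 0 ≤ b2)
    (N : ℕ) (w : ℕ → ℕ → ℝ)
    (hw0 : ∀ i, 0 < w i 0)
    (hwmono : ∀ i k, k < i → w i k < w i (k + 1))
    (mu : ℕ → ℝ) (hmu : ∀ i, mu i = beta * sigma + w i i)
    (omega : ℕ → ℂ)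
    (hrec : ∀ i, i < N → omega (i + 1) =
      (((a1 * a2 / mu i : ℝ) : ℂ) *
          ((∑ k ∈ Finset.Icc 1 i, (((w i k - w i (k - 1) : ℝ)) : ℂ) * omega k)
            + ((w i 0 : ℝ) : ℂ) * omega 0)
        - (((1 - sigma) / mu i * (lam1 * a2 * b1 + lam2 * a1 * b2 + beta * a1 * a2) : ℝ) : ℂ)
            * omega i
        + ((sigma ^ 2 / (mu i) ^ 2 * (lam1 * lam2 * b1 * b2) : ℝ) : ℂ) * omega i)
      / (((a1 + sigma * lam1 / mu i * b1 : ℝ) : ℂ)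
          * ((a2 + sigma * lam2 / mu i * b2 : ℝ) : ℂ))) :
    ∀ i, i ≤ N → ‖omega i‖ ≤ ‖omega 0‖ := by
  obtain ⟨hs1, hs2⟩ := hsigma
  have hσ0 : (0:ℝ) < sigma := by linarith
  have ha1' : (0:ℝ) < a1 := by linarith
  have ha2' : (0:ℝ) < a2 := by linarith
  have hwle : ∀ i k : ℕ, k ≤ i → w i 0 ≤ w i k := by
    intro i k hk
    induction k with
    | zero => exact le_rfl
    | succ n ih =>
      have hn : n < i := Nat.lt_of_lt_of_le (Nat.lt_succ_self n) hk
      exact le_trans (ih (le_of_lt hn)) (le_of_lt (hwmono i n hn))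
  have hwii : ∀ i, 0 < w i i := fun i => lt_of_lt_of_le (hw0 i) (hwle i i le_rfl)
  have hmupos : ∀ i, 0 < mu i := by
    intro i
    rw [hmu]
    nlinarith [hwii i]
  intro i
  induction i using Nat.strong_induction_on with
  | _ i IH =>
    intro hi
    match i with
    | 0 => exact le_rfl
    | (j + 1) =>
      have hjN : j < N := hi
      have hIH : ∀ k, k ≤ j → ‖omega k‖ ≤ ‖omega 0‖ :=
        fun k hk => IH k (Nat.lt_succ_of_le hk) (le_trans hk (le_of_lt hjN))
      set M := ‖omega 0‖ with hMdef
      have hM : 0 ≤ M := norm_nonneg _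
      have hμ : 0 < mu j := hmupos j
      have hd1 : 0 < a1 + sigma * lam1 / mu j * b1 := by
        have : 0 ≤ sigma * lam1 / mu j * b1 :=
          mul_nonneg (div_nonneg (mul_nonneg hσ0.le hlam1.le) hμ.le) hb1
        linarith
      have hd2 : 0 < a2 + sigma * lam2 / mu j * b2 := by
        have : 0 ≤ sigma * lam2 / mu j * b2 :=
          mul_nonneg (div_nonneg (mul_nonneg hσ0.le hlam2.le) hμ.le) hb2
        linarith
      rw [hrec j hjN]
      rw [norm_div, norm_mul, Complex.norm_real, Real.norm_eq_abs, Complex.norm_real, Real.norm_eq_abs,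
        abs_of_pos hd1, abs_of_pos hd2]
      rw [div_le_iff₀ (by positivity)]
      set cA := a1 * a2 / mu j with hcA
      set cB := (1 - sigma) / mu j * (lam1 * a2 * b1 + lam2 * a1 * b2 + beta * a1 * a2) with hcB
      set cC := sigma ^ 2 / (mu j) ^ 2 * (lam1 * lam2 * b1 * b2) with hcC
      have hcA0 : 0 ≤ cA := by positivity
      have hcB0 : 0 ≤ cB := by
        apply mul_nonneg (div_nonneg (by linarith) hμ.le)
        positivity
      have hcC0 : 0 ≤ cC := by positivity
      -- bound the sum term
      have hsum : ‖∑ k ∈ Finset.Icc 1 j,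
          (((w j k - w j (k - 1) : ℝ)) : ℂ) * omega k‖ ≤ (w j j - w j 0) * M := by
        calc ‖∑ k ∈ Finset.Icc 1 j, (((w j k - w j (k - 1) : ℝ)) : ℂ) * omega k‖
            ≤ ∑ k ∈ Finset.Icc 1 j,
                ‖(((w j k - w j (k - 1) : ℝ)) : ℂ) * omega k‖ :=
              norm_sum_le _ _
          _ ≤ ∑ k ∈ Finset.Icc 1 j, (w j k - w j (k - 1)) * M := by
              apply Finset.sum_le_sum
              intro k hk
              obtain ⟨hk1, hk2⟩ := Finset.mem_Icc.mp hk
              have hdk : 0 < w j k - w j (k - 1) := by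
                have hlt : k - 1 < j := lt_of_lt_of_le (Nat.sub_lt hk1 one_pos) hk2
                have hstep := hwmono j (k - 1) hlt
                rw [Nat.sub_add_cancel hk1] at hstep
                linarith
              rw [norm_mul, Complex.norm_real, Real.norm_eq_abs, abs_of_pos hdk]
              exact mul_le_mul_of_nonneg_left (hIH k hk2) hdk.le
          _ = (w j j - w j 0) * M := by
              rw [← Finset.sum_mul, fourier_tele_sum (w j) j]
      have hωj : ‖omega j‖ ≤ M := hIH j le_rfl
      set X := (cA : ℂ) * ((∑ k ∈ Finset.Icc 1 j,
          (((w j k - w j (k - 1) : ℝ)) : ℂ) * omega k) + ((w j 0 : ℝ) : ℂ) * omega 0) with hX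
      set Y := (cB : ℂ) * omega j with hY
      set Z := (cC : ℂ) * omega j with hZ
      have habs : ‖X - Y + Z‖
          ≤ ‖X‖ + ‖Y‖ + ‖Z‖ := by
        have t1 := norm_add_le (X - Y) Z
        have t2 : ‖X - Y‖ ≤ ‖X‖ + ‖Y‖ := by
          simpa [sub_eq_add_neg] using norm_add_le X (-Y)
        linarith
      have hXb : ‖X‖ ≤ cA * (w j j * M) := by
        rw [hX, norm_mul, Complex.norm_real, Real.norm_eq_abs, abs_of_nonneg hcA0]
        apply mul_le_mul_of_nonneg_left _ hcA0
        have t1 := norm_add_le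
          (∑ k ∈ Finset.Icc 1 j, (((w j k - w j (k - 1) : ℝ)) : ℂ) * omega k)
          (((w j 0 : ℝ) : ℂ) * omega 0)
        have t2 : ‖((w j 0 : ℝ) : ℂ) * omega 0‖ = w j 0 * M := by
          rw [norm_mul, Complex.norm_real, Real.norm_eq_abs, abs_of_pos (hw0 j)]
        nlinarith [hsum]
      have hYb : ‖Y‖ ≤ cB * M := by
        rw [hY, norm_mul, Complex.norm_real, Real.norm_eq_abs, abs_of_nonneg hcB0]
        exact mul_le_mul_of_nonneg_left hωj hcB0
      have hZb : ‖Z‖ ≤ cC * M := by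
        rw [hZ, norm_mul, Complex.norm_real, Real.norm_eq_abs, abs_of_nonneg hcC0]
        exact mul_le_mul_of_nonneg_left hωj hcC0
      have hkey : cA * w j j + cB + cC
          ≤ (a1 + sigma * lam1 / mu j * b1) * (a2 + sigma * lam2 / mu j * b2) := by
        rw [hcA, hcB, hcC]
        exact fourier_coeff_bound sigma beta lam1 lam2 a1 a2 b1 b2 (mu j) (w j j)
          hs1 hbeta hlam1 hlam2 ha1' ha2' hb1 hb2 (hwii j) (hmu j)
      have hfin := mul_le_mul_of_nonneg_right hkey hM
      calc ‖X - Y + Z‖ ≤ ‖X‖ + ‖Y‖ + ‖Z‖ := habs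
        _ ≤ cA * (w j j * M) + cB * M + cC * M := by linarith
        _ = (cA * w j j + cB + cC) * M := by ring
        _ ≤ ((a1 + sigma * lam1 / mu j * b1) * (a2 + sigma * lam2 / mu j * b2)) * M := hfin
        _ = M * ((a1 + sigma * lam1 / mu j * b1) * (a2 + sigma * lam2 / mu j * b2)) := by ring
end

section
/- Let α ∈ (0,1), θ ≥ 1, and suppose a function satisfies |g'''(t)| ≤ κ(1 + t^{α−3}) for t ∈ (0,T]. On the graded mesh t_i = T(i/N)^θ, for 1 ≤ i ≤ N−1 the quantity Q^{i+σ} := t_{i+σ}^α · τ_{i+1}^{3−α} · sup_{s∈(t_i,t_{i+1})}|g'''(s)| satisfies Q^{i+σ} ≤ C·N^{−min{3−α, θα}} for a constant C independent of N and i. -/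
theorem graded_mesh_truncation_term_bound
    (alpha theta sigma T kappa : ℝ)
    (halpha : alpha ∈ Set.Ioo (0 : ℝ) 1)
    (htheta : 1 ≤ theta)
    (hsigma : sigma ∈ Set.Ioc (1 / 2 : ℝ) 1)
    (hT : 0 < T) (hkappa : 0 ≤ kappa)
    (g : ℝ → ℝ)
    (hg : ∀ t ∈ Set.Ioc (0 : ℝ) T,
      |iteratedDeriv 3 g t| ≤ kappa * (1 + t ^ (alpha - 3))) :
    ∃ C : ℝ, 0 < C ∧ ∀ N : ℕ, 1 ≤ N → ∀ i : ℕ, 1 ≤ i → i ≤ N - 1 →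
      ∀ t : ℕ → ℝ, (∀ j, t j = T * (((j : ℝ) / (N : ℝ)) ^ theta)) →
        (t i + sigma * (t (i + 1) - t i)) ^ alpha
            * (t (i + 1) - t i) ^ (3 - alpha)
            * (⨆ s ∈ Set.Ioo (t i) (t (i + 1)), |iteratedDeriv 3 g s|)
          ≤ C * (N : ℝ) ^ (-(min (3 - alpha) (theta * alpha))) := by
  obtain ⟨ha0, ha1⟩ := halpha
  obtain ⟨hs0, hs1⟩ := hsigma
  have hθ0 : (0:ℝ) < theta := lt_of_lt_of_le one_pos htheta
  set m : ℝ := min (3 - alpha) (theta * alpha) with hm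
  set A : ℝ := T ^ alpha * (theta * T) ^ (3 - alpha) with hA
  set D : ℝ := theta ^ (3 - alpha) * ((2:ℝ) ^ theta) ^ (3 - alpha) * T ^ alpha with hD
  have hA0 : 0 ≤ A := by positivity
  have hD0 : 0 ≤ D := by positivity
  refine ⟨kappa * (A + D) + 1, by linarith [mul_nonneg hkappa (add_nonneg hA0 hD0)], ?_⟩
  intro N hN i hi1 hiN t ht
  set n : ℝ := (N:ℝ) with hn
  have hn1 : (1:ℝ) ≤ n := by rw [hn]; exact_mod_cast hN
  have hn0 : (0:ℝ) < n := lt_of_lt_of_le one_pos hn1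
  have hi1' : (1:ℝ) ≤ (i:ℝ) := by exact_mod_cast hi1
  have hiN' : (i:ℝ) + 1 ≤ n := by
    have h' : i + 1 ≤ N := by omega
    rw [hn]; exact_mod_cast h'
  set x : ℝ := (i:ℝ) / n with hxdef
  set y : ℝ := ((i:ℝ) + 1) / n with hydef
  set k : ℝ := (i:ℝ) + 1 with hkdef
  have hk1 : (1:ℝ) ≤ k := by simp only [hkdef]; linarith
  have hk0 : (0:ℝ) < k := lt_of_lt_of_le one_pos hk1
  have hkn : k ≤ n := hiN'
  have hx0 : 0 < x := div_pos (by linarith) hn0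
  have hy0 : 0 < y := div_pos hk0 hn0
  have hxy : x < y := by
    apply div_lt_div_of_pos_right ?_ hn0
    linarith
  have hy1 : y ≤ 1 := by rw [hydef, div_le_one hn0]; exact hiN'
  have hyx2 : y ≤ 2 * x := by
    rw [hydef, hxdef]
    rw [div_le_iff₀ hn0]
    have : (2:ℝ) * ((i:ℝ)/n) * n = 2 * (i:ℝ) := by field_simp
    rw [this]; linarith
  have hyx1 : y - x = 1 / n := by
    rw [hydef, hxdef, div_sub_div_same, hkdef]; ring_nf
  have hkny : k = n * y := by
    rw [hydef]; field_simp
  -- mesh points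
  set u : ℝ := t i with hu
  set v : ℝ := t (i + 1) with hv
  have hu_eq : u = T * x ^ theta := by rw [hu, ht i]
  have hv_eq : v = T * y ^ theta := by
    rw [hv, ht (i+1), hydef, hkdef, Nat.cast_add, Nat.cast_one]
  have hxp : 0 < x ^ theta := Real.rpow_pos_of_pos hx0 _
  have hyp : 0 < y ^ theta := Real.rpow_pos_of_pos hy0 _
  have hu0 : 0 < u := by rw [hu_eq]; positivity
  have hv0 : 0 < v := by rw [hv_eq]; positivity
  have huv : u < v := by
    rw [hu_eq, hv_eq]
    exact (mul_lt_mul_iff_right₀ hT).mpr (Real.rpow_lt_rpow hx0.le hxy hθ0)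
  have hτ0 : 0 < v - u := by linarith
  have hvT : v ≤ T := by
    rw [hv_eq]
    have h' : y ^ theta ≤ 1 := Real.rpow_le_one hy0.le hy1 hθ0.le
    calc T * y ^ theta ≤ T * 1 := mul_le_mul_of_nonneg_left h' hT.le
      _ = T := mul_one T
  -- Bernoulli : (y^θ - x^θ) * y ≤ θ (y-x) y^θ
  have hB : (y ^ theta - x ^ theta) * y ≤ theta * (y - x) * y ^ theta := by
    have hs' : (-1:ℝ) ≤ x / y - 1 := by
      have : 0 < x / y := div_pos hx0 hy0
      linarith
    have h1 := one_add_mul_self_le_rpow_one_add hs' htheta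
    have h2 : (1 : ℝ) + (x / y - 1) = x / y := by ring
    rw [h2, Real.div_rpow hx0.le hy0.le] at h1
    have h3 := mul_le_mul_of_nonneg_right h1 hyp.le
    rw [div_mul_cancel₀ _ hyp.ne'] at h3
    have h4 := mul_le_mul_of_nonneg_right h3 hy0.le
    have key : (1 + theta * (x / y - 1)) * y = y + theta * (x - y) := by
      field_simp
    have h5 : 1 + theta * (x / y - 1) ≤ x ^ theta / y ^ theta := h1
    have h6 : (1 + theta * (x / y - 1)) * y ^ theta * y
        = (y + theta * (x - y)) * y ^ theta := by
      rw [mul_right_comm, key]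
    rw [h6] at h4
    ring_nf at h4 ⊢
    linarith only [h4]
  have hB2 : y ^ theta - x ^ theta ≤ theta * (y - x) * y ^ theta / y := by
    rw [le_div_iff₀ hy0]; linarith
  -- tau bounds
  have hτeq : v - u = T * (y ^ theta - x ^ theta) := by rw [hu_eq, hv_eq]; ring
  have hτT : v - u ≤ theta * T / n := by
    have hyy : y ^ theta / y ≤ 1 := by
      rw [div_le_one hy0]
      calc y ^ theta ≤ y ^ (1:ℝ) :=
            Real.rpow_le_rpow_of_exponent_ge hy0 hy1 htheta
        _ = y := Real.rpow_one y
    have h5 : y ^ theta - x ^ theta ≤ theta * (1/n) := by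
      have := hB2
      rw [hyx1] at this
      calc y ^ theta - x ^ theta ≤ theta * (1/n) * y ^ theta / y := this
        _ = theta * (1/n) * (y ^ theta / y) := by ring
        _ ≤ theta * (1/n) * 1 := by
            apply mul_le_mul_of_nonneg_left hyy
            positivity
        _ = theta * (1/n) := by ring
    rw [hτeq]
    calc T * (y ^ theta - x ^ theta) ≤ T * (theta * (1/n)) :=
          mul_le_mul_of_nonneg_left h5 hT.le
      _ = theta * T / n := by ring
  have hτk : v - u ≤ theta * v / k := by
    rw [hτeq, hv_eq, hkny]
    have h6 : T * (y ^ theta - x ^ theta) ≤ T * (theta * (1/n) * y ^ theta / y) := by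
      apply mul_le_mul_of_nonneg_left _ hT.le
      rw [hyx1] at hB2; exact hB2
    calc T * (y ^ theta - x ^ theta) ≤ T * (theta * (1/n) * y ^ theta / y) := h6
      _ = theta * (T * y ^ theta) / (n * y) := by field_simp
  -- v ≤ 2^θ u
  have hv2u : v ≤ 2 ^ theta * u := by
    rw [hu_eq, hv_eq]
    have h7 : y ^ theta ≤ (2 * x) ^ theta :=
      Real.rpow_le_rpow hy0.le hyx2 hθ0.le
    rw [Real.mul_rpow (by norm_num) hx0.le] at h7
    calc T * y ^ theta ≤ T * ((2:ℝ) ^ theta * x ^ theta) :=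
          mul_le_mul_of_nonneg_left h7 hT.le
      _ = 2 ^ theta * (T * x ^ theta) := by ring
  -- sup bound
  have hub : u ^ (alpha - 3) = (u ^ (3 - alpha))⁻¹ := by
    rw [show alpha - 3 = -(3 - alpha) by ring, Real.rpow_neg hu0.le]
  have hS0 : 0 ≤ ⨆ s ∈ Set.Ioo u v, |iteratedDeriv 3 g s| :=
    Real.iSup_nonneg fun s => Real.iSup_nonneg fun _ => abs_nonneg _
  have hbnd0 : 0 ≤ kappa * (1 + u ^ (alpha - 3)) := by
    have : 0 < u ^ (alpha - 3) := Real.rpow_pos_of_pos hu0 _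
    exact mul_nonneg hkappa (by linarith)
  have hSb : (⨆ s ∈ Set.Ioo u v, |iteratedDeriv 3 g s|)
      ≤ kappa * (1 + u ^ (alpha - 3)) := by
    apply Real.iSup_le _ hbnd0
    intro s
    apply Real.iSup_le _ hbnd0
    intro hs
    have hsT : s ∈ Set.Ioc (0:ℝ) T := ⟨lt_trans hu0 hs.1, le_trans hs.2.le hvT⟩
    calc |iteratedDeriv 3 g s| ≤ kappa * (1 + s ^ (alpha - 3)) := hg s hsT
      _ ≤ kappa * (1 + u ^ (alpha - 3)) := by
          have : s ^ (alpha - 3) ≤ u ^ (alpha - 3) :=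
            Real.rpow_le_rpow_of_nonpos hu0 hs.1.le (by linarith)
          apply mul_le_mul_of_nonneg_left _ hkappa
          linarith
  -- P1
  have hP1 : v ^ alpha * (v - u) ^ (3 - alpha) ≤ A * n ^ (-m) := by
    have h8 : v ^ alpha ≤ T ^ alpha := Real.rpow_le_rpow hv0.le hvT ha0.le
    have h9 : (v - u) ^ (3 - alpha) ≤ (theta * T / n) ^ (3 - alpha) :=
      Real.rpow_le_rpow hτ0.le hτT (by linarith)
    calc v ^ alpha * (v - u) ^ (3 - alpha)
        ≤ T ^ alpha * (theta * T / n) ^ (3 - alpha) :=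
          mul_le_mul h8 h9 (Real.rpow_nonneg hτ0.le _) (Real.rpow_nonneg hT.le _)
      _ = A * n ^ (-(3 - alpha)) := by
          rw [Real.div_rpow (by positivity) hn0.le, Real.rpow_neg hn0.le, hA]
          ring
      _ ≤ A * n ^ (-m) := by
          apply mul_le_mul_of_nonneg_left _ hA0
          apply Real.rpow_le_rpow_of_exponent_le hn1
          have : m ≤ 3 - alpha := min_le_left _ _
          linarith
  -- key exponent lemma
  have hkey : k ^ (theta * alpha - (3 - alpha)) * n ^ (-(theta * alpha)) ≤ n ^ (-m) := by
    rcases le_or_gt (theta * alpha) (3 - alpha) with hc | hc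
    · have hm' : m = theta * alpha := min_eq_right hc
      have h1 : k ^ (theta * alpha - (3 - alpha)) ≤ 1 :=
        Real.rpow_le_one_of_one_le_of_nonpos hk1 (by linarith)
      calc k ^ (theta * alpha - (3 - alpha)) * n ^ (-(theta * alpha))
          ≤ 1 * n ^ (-(theta * alpha)) :=
            mul_le_mul_of_nonneg_right h1 (Real.rpow_nonneg hn0.le _)
        _ = n ^ (-m) := by rw [one_mul, hm']
    · have hm' : m = 3 - alpha := min_eq_left hc.le
      have h1 : k ^ (theta * alpha - (3 - alpha)) ≤ n ^ (theta * alpha - (3 - alpha)) :=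
        Real.rpow_le_rpow hk0.le hkn (by linarith)
      calc k ^ (theta * alpha - (3 - alpha)) * n ^ (-(theta * alpha))
          ≤ n ^ (theta * alpha - (3 - alpha)) * n ^ (-(theta * alpha)) :=
            mul_le_mul_of_nonneg_right h1 (Real.rpow_nonneg hn0.le _)
        _ = n ^ (theta * alpha - (3 - alpha) + -(theta * alpha)) :=
            (Real.rpow_add hn0 _ _).symm
        _ = n ^ (-m) := by rw [hm']; congr 1; ring
  -- P2
  have hP2 : v ^ alpha * u ^ (alpha - 3) * (v - u) ^ (3 - alpha) ≤ D * n ^ (-m) := by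
    have hup : 0 < u ^ (alpha - 3) := Real.rpow_pos_of_pos hu0 _
    have h10 : (v - u) ^ (3 - alpha) ≤ (theta * v / k) ^ (3 - alpha) :=
      Real.rpow_le_rpow hτ0.le hτk (by linarith)
    have hE2 : (theta * v / k) ^ (3 - alpha)
        = theta ^ (3 - alpha) * v ^ (3 - alpha) * (k ^ (3 - alpha))⁻¹ := by
      rw [Real.div_rpow (by positivity) hk0.le, Real.mul_rpow hθ0.le hv0.le,
        div_eq_mul_inv]
    have hE3 : u ^ (alpha - 3) * v ^ (3 - alpha) = (v / u) ^ (3 - alpha) := by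
      rw [Real.div_rpow hv0.le hu0.le, hub, div_eq_mul_inv]; ring
    have hE5 : (v / u) ^ (3 - alpha) ≤ ((2:ℝ) ^ theta) ^ (3 - alpha) := by
      apply Real.rpow_le_rpow (by positivity) _ (by linarith)
      rw [div_le_iff₀ hu0]; linarith
    have hE4 : v ^ alpha = T ^ alpha * (k ^ (theta * alpha) * (n ^ (theta * alpha))⁻¹) := by
      rw [hv_eq, Real.mul_rpow hT.le hyp.le, ← Real.rpow_mul hy0.le,
        hydef, Real.div_rpow hk0.le hn0.le, div_eq_mul_inv]
    have hkk : k ^ (theta * alpha - (3 - alpha))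
        = k ^ (theta * alpha) * (k ^ (3 - alpha))⁻¹ := by
      rw [Real.rpow_sub hk0, div_eq_mul_inv]
    calc v ^ alpha * u ^ (alpha - 3) * (v - u) ^ (3 - alpha)
        ≤ v ^ alpha * u ^ (alpha - 3) * (theta * v / k) ^ (3 - alpha) := by
          apply mul_le_mul_of_nonneg_left h10
          positivity
      _ = theta ^ (3 - alpha) * (k ^ (3 - alpha))⁻¹
            * (u ^ (alpha - 3) * v ^ (3 - alpha)) * v ^ alpha := by
          rw [hE2]; ring
      _ = theta ^ (3 - alpha) * (k ^ (3 - alpha))⁻¹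
            * (v / u) ^ (3 - alpha) * v ^ alpha := by rw [hE3]
      _ ≤ theta ^ (3 - alpha) * (k ^ (3 - alpha))⁻¹
            * ((2:ℝ) ^ theta) ^ (3 - alpha) * v ^ alpha := by
          apply mul_le_mul_of_nonneg_right _ (Real.rpow_nonneg hv0.le _)
          apply mul_le_mul_of_nonneg_left hE5
          positivity
      _ = D * (k ^ (theta * alpha) * (k ^ (3 - alpha))⁻¹ * (n ^ (theta * alpha))⁻¹) := by
          rw [hE4, hD]; ring
      _ = D * (k ^ (theta * alpha - (3 - alpha)) * n ^ (-(theta * alpha))) := by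
          rw [← hkk, Real.rpow_neg hn0.le]
      _ ≤ D * n ^ (-m) := mul_le_mul_of_nonneg_left hkey hD0
  -- assemble
  have hw0 : 0 ≤ u + sigma * (v - u) := by
    have : 0 ≤ sigma * (v - u) := mul_nonneg (by linarith) hτ0.le
    linarith
  have hwv : u + sigma * (v - u) ≤ v := by
    have : sigma * (v - u) ≤ 1 * (v - u) :=
      mul_le_mul_of_nonneg_right hs1 hτ0.le
    linarith
  have hwa : (u + sigma * (v - u)) ^ alpha ≤ v ^ alpha :=
    Real.rpow_le_rpow hw0 hwv ha0.le
  calc (u + sigma * (v - u)) ^ alpha * (v - u) ^ (3 - alpha)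
        * (⨆ s ∈ Set.Ioo u v, |iteratedDeriv 3 g s|)
      ≤ v ^ alpha * (v - u) ^ (3 - alpha) * (kappa * (1 + u ^ (alpha - 3))) := by
        apply mul_le_mul _ hSb hS0 (by positivity)
        exact mul_le_mul_of_nonneg_right hwa (Real.rpow_nonneg hτ0.le _)
    _ = kappa * (v ^ alpha * (v - u) ^ (3 - alpha))
          + kappa * (v ^ alpha * u ^ (alpha - 3) * (v - u) ^ (3 - alpha)) := by ring
    _ ≤ kappa * (A * n ^ (-m)) + kappa * (D * n ^ (-m)) :=
        add_le_add (mul_le_mul_of_nonneg_left hP1 hkappa)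
          (mul_le_mul_of_nonneg_left hP2 hkappa)
    _ = kappa * (A + D) * n ^ (-m) := by ring
    _ ≤ (kappa * (A + D) + 1) * n ^ (-m) := by
        apply mul_le_mul_of_nonneg_right _ (Real.rpow_nonneg hn0.le _)
        linarith
end
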